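/- For every nondecreasing function φ: ω → ω with φ(0) = 0 and φ(n) ≥ n for all n, there exist a bounded complexity measure ψ and a nonempty closed class A of decision tables over E_2 such that F_{ψ,A}(n) = max{ψ^d(T) : T ∈ A, ψ^s(T) ≤ n} is defined and equals φ(n) for every n ∈ ω. -/

import Mathlib

/- Decision tables over E_{k+2} = {0, ..., k+1}, following Ostonov & Moshkov,
"Deterministic and Strongly Nondeterministic Decision Trees for Decision Tables
from Closed Classes".  Columns are labeled with attributes (natural numbers),
rows are functions supported on the attribute set, decisions are Booleans. -/

namespace ClosedClasses

/-- A decision table with 0-1-decisions over `E_{k+2}`. Rows are pairwise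
different (they form a `Finset`) and vanish outside the attribute set. -/
structure Table (k : ℕ) where
  attrs : Finset ℕ
  rows : Finset (ℕ → Fin (k + 2))
  dec : (ℕ → Fin (k + 2)) → Bool
  supp : ∀ r ∈ rows, ∀ a ∉ attrs, r a = 0

namespace Table

variable {k : ℕ}

/-- Number of columns. -/
def W (T : Table k) : ℕ := T.attrs.card

/-- Number of rows. -/
def N (T : Table k) : ℕ := T.rows.card

/-- All rows carry the same decision. -/
def ConstDec (T : Table k) : Prop :=
  ∀ r ∈ T.rows, ∀ r' ∈ T.rows, T.dec r = T.dec r'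

/-- `D` separates the row `r` from all other rows of `T`. -/
def Separates (T : Table k) (D : Finset ℕ) (r : ℕ → Fin (k + 2)) : Prop :=
  D ⊆ T.attrs ∧ ∀ r' ∈ T.rows, r' ≠ r → ∃ a ∈ D, r a ≠ r' a

/-- `S(T, r)`: minimum cardinality of a separating set for row `r`. -/
noncomputable def Srow (T : Table k) (r : ℕ → Fin (k + 2)) : ℕ :=
  sInf {m | ∃ D : Finset ℕ, T.Separates D r ∧ D.card = m}

/-- `S(T)`: maximum over rows of `S(T, r)`. -/
noncomputable def S (T : Table k) : ℕ :=
  sSup {m | ∃ r ∈ T.rows, T.Srow r = m}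

/-- A test of `T`: a set of columns distinguishing rows with different decisions. -/
def IsTest (T : Table k) (D : Finset ℕ) : Prop :=
  D ⊆ T.attrs ∧
    ∀ r ∈ T.rows, ∀ r' ∈ T.rows, T.dec r ≠ T.dec r' → ∃ a ∈ D, r a ≠ r' a

/-- `Θ(T)`: minimum cardinality of a test of `T`. -/
noncomputable def theta (T : Table k) : ℕ :=
  sInf {m | ∃ D : Finset ℕ, T.IsTest D ∧ D.card = m}

end Table

/-- `(k+2)`-decision trees: leaves carry decisions, internal nodes query an
attribute and branch on its `k+2` possible values. -/
inductive DT (k : ℕ) where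
  | leaf : Bool → DT k
  | node : ℕ → (Fin (k + 2) → DT k) → DT k

namespace DT

variable {k : ℕ}

/-- Deterministic evaluation of a tree on a row. -/
def eval : DT k → (ℕ → Fin (k + 2)) → Bool
  | leaf b, _ => b
  | node a ch, r => eval (ch (r a)) r

/-- Depth: maximum number of queries along a complete path. -/
def depth : DT k → ℕ
  | leaf _ => 0
  | node _ ch => 1 + Finset.univ.sup fun i => (ch i).depth

/-- The set `P(Γ)` of attributes queried in the tree. -/
def attrSet : DT k → Finset ℕ
  | leaf _ => ∅
  | node a ch => insert a (Finset.univ.biUnion fun i => (ch i).attrSet)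

/-- `ψ`-cost: maximum over complete paths of `ψ` of the word of queried
attributes (the accumulator `w` holds attributes already queried). -/
def cost (ψ : List ℕ → ℕ) : DT k → List ℕ → ℕ
  | leaf _, w => ψ w
  | node a ch, w => Finset.univ.sup fun i => cost ψ (ch i) (a :: w)

end DT

/-- `Γ` is a deterministic decision tree for the table `T`. -/
def IsDT {k : ℕ} (T : Table k) (Γ : DT k) : Prop :=
  Γ.attrSet ⊆ T.attrs ∧ ∀ r ∈ T.rows, Γ.eval r = T.dec r

/-- `h^d(T)`: minimum depth of a deterministic decision tree for `T`. -/
noncomputable def hd {k : ℕ} (T : Table k) : ℕ :=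
  sInf {m | ∃ Γ : DT k, IsDT T Γ ∧ Γ.depth = m}

/-- `ψ^d(T)`: minimum `ψ`-complexity of a deterministic decision tree for `T`. -/
noncomputable def psid {k : ℕ} (ψ : List ℕ → ℕ) (T : Table k) : ℕ :=
  sInf {m | ∃ Γ : DT k, IsDT T Γ ∧ Γ.cost ψ [] = m}

/-- A row satisfies a rule (a conjunction of equations `attribute = value`). -/
def RuleSat {k : ℕ} (rule : List (ℕ × Fin (k + 2))) (r : ℕ → Fin (k + 2)) : Prop :=
  ∀ p ∈ rule, r p.1 = p.2

/-- A strongly nondeterministic decision tree for `T`, represented by the set of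
words of its complete paths (rules): every rule uses attributes of `T`, each
row with decision 1 satisfies some rule, and each rule is consistent only with
rows carrying decision 1. -/
def IsSNDT {k : ℕ} (T : Table k) (R : Finset (List (ℕ × Fin (k + 2)))) : Prop :=
  (∀ rule ∈ R, ∀ p ∈ rule, p.1 ∈ T.attrs) ∧
  (∀ r ∈ T.rows, T.dec r = true → ∃ rule ∈ R, RuleSat rule r) ∧
  (∀ rule ∈ R, ∀ r ∈ T.rows, RuleSat rule r → T.dec r = true)

/-- `ψ^s(T)`: minimum `ψ`-complexity of a strongly nondeterministic decision
tree for `T`. -/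
noncomputable def psis {k : ℕ} (ψ : List ℕ → ℕ) (T : Table k) : ℕ :=
  sInf {m | ∃ R, IsSNDT T R ∧ R.sup (fun rule => ψ (rule.map Prod.fst)) = m}

/-- `h^s(T)`: minimum depth of a strongly nondeterministic decision tree. -/
noncomputable def hs {k : ℕ} (T : Table k) : ℕ :=
  sInf {m | ∃ R, IsSNDT T R ∧ R.sup (fun rule => (rule.map Prod.fst).length) = m}

/-- A complexity measure on finite words over the alphabet `{f_i : i ∈ ω}`. -/
structure CMeasure where
  ψ : List ℕ → ℕ
  pos : ∀ w, ψ w = 0 ↔ w = []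
  perm : ∀ w w' : List ℕ, w.Perm w' → ψ w = ψ w'
  mono : ∀ w₁ w₂ : List ℕ, ψ w₁ ≤ ψ (w₁ ++ w₂)
  subadd : ∀ w₁ w₂ : List ℕ, ψ (w₁ ++ w₂) ≤ ψ w₁ + ψ w₂

/-- Bounded complexity measure: `ψ(α) ≥ |α|`. -/
def CMeasure.Bounded (ψ : CMeasure) : Prop := ∀ w : List ℕ, w.length ≤ ψ.ψ w

/-- Extension of a complexity measure to finite sets of attributes. -/
def CMeasure.setCost (ψ : CMeasure) (D : Finset ℕ) : ℕ := ψ.ψ (D.sort (· ≤ ·))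

namespace Table

variable {k : ℕ}

/-- `S_ψ(T, r)`: minimum `ψ`-complexity of a set separating `r` from the other rows. -/
noncomputable def Spsirow (ψ : CMeasure) (T : Table k) (r : ℕ → Fin (k + 2)) : ℕ :=
  sInf {m | ∃ D : Finset ℕ, T.Separates D r ∧ ψ.setCost D = m}

/-- `S_ψ(T)`: maximum over rows of `S_ψ(T, r)`. -/
noncomputable def Spsi (ψ : CMeasure) (T : Table k) : ℕ :=
  sSup {m | ∃ r ∈ T.rows, Spsirow ψ T r = m}

/-- `Θ_ψ(T)`: minimum `ψ`-complexity of a test of `T`. -/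
noncomputable def thetapsi (ψ : CMeasure) (T : Table k) : ℕ :=
  sInf {m | ∃ D : Finset ℕ, T.IsTest D ∧ ψ.setCost D = m}

/-- `W_ψ(T) = ψ(P(T))`. -/
def Wpsi (ψ : CMeasure) (T : Table k) : ℕ := ψ.setCost T.attrs

/-- `V_ψ(T) = max{ψ(f_i) : f_i ∈ P(T)}`. -/
noncomputable def Vpsi (ψ : CMeasure) (T : Table k) : ℕ :=
  sSup {m | ∃ a ∈ T.attrs, ψ.ψ [a] = m}

end Table

/-- Restriction of a row to a set of attributes. -/
def restrict {k : ℕ} (A : Finset ℕ) (r : ℕ → Fin (k + 2)) : ℕ → Fin (k + 2) :=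
  fun a => if a ∈ A then r a else 0

/-- `T'` belongs to the closure `[T]` of `T` under removal of columns and
changing of decisions: `T'` keeps a subset of the columns of `T`, its rows are
the restrictions of the rows of `T`, and its decisions are arbitrary. -/
def InClosure {k : ℕ} (T' T : Table k) : Prop :=
  T'.attrs ⊆ T.attrs ∧ (T'.rows : Set (ℕ → Fin (k + 2))) = restrict T'.attrs '' (T.rows : Set (ℕ → Fin (k + 2)))

/-- A nonempty class of decision tables closed under removal of columns and
changing of decisions. -/
def ClosedClass {k : ℕ} (A : Set (Table k)) : Prop :=
  A.Nonempty ∧ ∀ T ∈ A, ∀ T' : Table k, InClosure T' T → T' ∈ A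

/-- `Ŝ_ψ(T) = max{S_ψ(T') : T' ∈ [T]}`. -/
noncomputable def Shatpsi {k : ℕ} (ψ : CMeasure) (T : Table k) : ℕ :=
  sSup {m | ∃ T' : Table k, InClosure T' T ∧ T'.Spsi ψ = m}

/-- `Ŝ(T) = max{S(T') : T' ∈ [T]}`. -/
noncomputable def Shat {k : ℕ} (T : Table k) : ℕ :=
  sSup {m | ∃ T' : Table k, InClosure T' T ∧ T'.S = m}

/-- Fixing the attributes of the word `p` to the listed values restricts `T`
to a subtable (possibly empty) in which all rows carry the same decision. -/
def FixConst {k : ℕ} (T : Table k) (p : List (ℕ × Fin (k + 2))) : Prop :=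
  ∀ r ∈ T.rows, ∀ r' ∈ T.rows, RuleSat p r → RuleSat p r' → T.dec r = T.dec r'

/-- `M_ψ(T, δ)`: minimum `ψ`-value of a word of attributes of `T` whose
fixation to the values of `δ` yields a subtable with constant decisions. -/
noncomputable def Mpsirow {k : ℕ} (ψ : CMeasure) (T : Table k)
    (δ : ℕ → Fin (k + 2)) : ℕ :=
  sInf {m | ∃ p : List (ℕ × Fin (k + 2)),
    (∀ q ∈ p, q.1 ∈ T.attrs ∧ q.2 = δ q.1) ∧ FixConst T p ∧
      ψ.ψ (p.map Prod.fst) = m}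

/-- `M_ψ(T)`: maximum of `M_ψ(T, δ)` over all tuples `δ ∈ E_{k+2}^{W(T)}`. -/
noncomputable def Mpsi {k : ℕ} (ψ : CMeasure) (T : Table k) : ℕ :=
  sSup {m | ∃ δ : ℕ → Fin (k + 2), (∀ a ∉ T.attrs, δ a = 0) ∧ Mpsirow ψ T δ = m}

/-- A critical table: for every column there are two rows differing exactly
in this column. -/
def Critical {k : ℕ} (T : Table k) : Prop :=
  T.rows.Nonempty ∧ ∀ a ∈ T.attrs, ∃ r ∈ T.rows, ∃ r' ∈ T.rows,
    r a ≠ r' a ∧ ∀ b : ℕ, b ≠ a → r b = r' b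

/-- `H_D(n)`: the largest element of `D` not exceeding `n` (0 if none). -/
noncomputable def HD (D : Set ℕ) (n : ℕ) : ℕ := sSup (D ∩ Set.Iic n)

end ClosedClasses

open ClosedClasses
namespace PhiProof
open ClosedClasses

noncomputable section
open Classical

/-- quotient: number of attributes in the `m`-th block. -/
def q (φ : ℕ → ℕ) (m : ℕ) : ℕ := (φ m - 1) / m + 1

/-- weight of the last attribute in the `m`-th block. -/
def s (φ : ℕ → ℕ) (m : ℕ) : ℕ := φ m - ((φ m - 1) / m) * m

/-- attribute weights. -/
def wgt (φ : ℕ → ℕ) (a : ℕ) : ℕ :=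
  if a.unpair.1 = 0 then 1
  else if a.unpair.2 + 1 < q φ a.unpair.1 then a.unpair.1
  else if a.unpair.2 + 1 = q φ a.unpair.1 then max 1 (s φ a.unpair.1)
  else 1

theorem wgt_pos (φ : ℕ → ℕ) (a : ℕ) : 1 ≤ wgt φ a := by
  unfold wgt
  split
  · exact le_refl 1
  · split
    · omega
    · split
      · exact le_max_left _ _
      · exact le_refl 1

theorem s_le (φ : ℕ → ℕ) {m : ℕ} (hm : 1 ≤ m) : s φ m ≤ m := by
  have h : φ m - 1 < (((φ m - 1) / m) + 1) * m := by
    rw [← Nat.div_lt_iff_lt_mul hm]; omega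
  have h2 : (((φ m - 1) / m) + 1) * m = ((φ m - 1) / m) * m + m := by ring
  unfold s; omega

theorem s_pos (φ : ℕ → ℕ) {m : ℕ} (hm : 1 ≤ φ m) : 1 ≤ s φ m := by
  have h : ((φ m - 1) / m) * m ≤ φ m - 1 := Nat.div_mul_le_self _ _
  unfold s; omega

theorem wgt_le (φ : ℕ → ℕ) {m i : ℕ} (hm : 1 ≤ m) : wgt φ (Nat.pair m i) ≤ m := by
  unfold wgt
  simp only [Nat.unpair_pair]
  have := s_le φ hm
  split
  · omega
  · split
    · exact le_refl m
    · split <;> omega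

theorem wgt_eq_of_lt (φ : ℕ → ℕ) {m i : ℕ} (hm : 1 ≤ m) (hi : i + 1 < q φ m) :
    wgt φ (Nat.pair m i) = m := by
  unfold wgt
  simp only [Nat.unpair_pair]
  rw [if_neg (by omega), if_pos hi]

/-- the measure `ψ`. -/
def psim (φ : ℕ → ℕ) : CMeasure where
  ψ := fun w => (w.map (wgt φ)).sum
  pos := by
    intro w
    cases w with
    | nil => simp
    | cons a l =>
      simp only [List.map_cons, List.sum_cons]
      constructor
      · intro h; have := wgt_pos φ a; omega
      · intro h; simp at h
  perm := fun w w' h => (h.map (wgt φ)).sum_eq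
  mono := by intro w₁ w₂; simp [List.sum_append]
  subadd := by intro w₁ w₂; simp [List.sum_append]

theorem psim_bounded (φ : ℕ → ℕ) : (psim φ).Bounded := by
  intro w
  show w.length ≤ (w.map (wgt φ)).sum
  induction w with
  | nil => simp
  | cons a l ih => simp only [List.map_cons, List.sum_cons, List.length_cons]
                   have := wgt_pos φ a; omega

/-- list-sum dominates finset-sum over a covered set. -/
theorem sum_le_list_sum (φ : ℕ → ℕ) (D : Finset ℕ) (l : List ℕ)
    (h : ∀ a ∈ D, a ∈ l) : D.sum (wgt φ) ≤ (l.map (wgt φ)).sum := by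
  induction l generalizing D with
  | nil =>
    have : D = ∅ := Finset.eq_empty_of_forall_notMem (fun a ha => by simpa using h a ha)
    simp [this]
  | cons a t ih =>
    by_cases haD : a ∈ D
    · have h1 : D.erase a ⊆ D := Finset.erase_subset _ _
      have h2 : ∀ b ∈ D.erase a, b ∈ t := by
        intro b hb
        have hba : b ≠ a := Finset.ne_of_mem_erase hb
        have := h b (Finset.mem_of_mem_erase hb)
        simpa [hba] using this
      have := ih (D.erase a) h2
      have hsum : D.sum (wgt φ) = wgt φ a + (D.erase a).sum (wgt φ) :=
        (Finset.add_sum_erase _ _ haD).symm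
      simp only [List.map_cons, List.sum_cons]
      omega
    · have h2 : ∀ b ∈ D, b ∈ t := by
        intro b hb
        have := h b hb
        rcases List.mem_cons.1 this with h' | h'
        · exact absurd (h' ▸ hb) haD
        · exact h'
      have := ih D h2
      simp only [List.map_cons, List.sum_cons]
      omega

theorem sum_toList (f : ℕ → ℕ) (sF : Finset ℕ) : (sF.toList.map f).sum = sF.sum f := by
  rw [← Multiset.sum_coe, ← Multiset.map_coe, Finset.coe_toList]; rfl

/-- the attribute block of `T_m`. -/
def Am (φ : ℕ → ℕ) (m : ℕ) : Finset ℕ := (Finset.range (q φ m)).image (Nat.pair m)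

theorem mem_Am {φ : ℕ → ℕ} {m a : ℕ} (h : a ∈ Am φ m) :
    ∃ i < q φ m, a = Nat.pair m i := by
  rcases Finset.mem_image.1 h with ⟨i, hi, rfl⟩
  exact ⟨i, Finset.mem_range.1 hi, rfl⟩

theorem wgt_le_of_mem (φ : ℕ → ℕ) {m a : ℕ} (hm : 1 ≤ m) (h : a ∈ Am φ m) :
    wgt φ a ≤ m := by
  rcases mem_Am h with ⟨i, _, rfl⟩
  exact wgt_le φ hm

theorem eq_heavy_of_small (φ : ℕ → ℕ) {m a : ℕ} (hm : 1 ≤ m) (h : a ∈ Am φ m)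
    (hlt : wgt φ a < m) : a = Nat.pair m (q φ m - 1) := by
  rcases mem_Am h with ⟨i, hi, rfl⟩
  by_cases h1 : i + 1 < q φ m
  · rw [wgt_eq_of_lt φ hm h1] at hlt; omega
  · have : i = q φ m - 1 := by omega
    rw [this]

theorem sum_Am (φ : ℕ → ℕ) {m : ℕ} (hm : 1 ≤ m) (hge : m ≤ φ m) :
    (Am φ m).sum (wgt φ) = φ m := by
  unfold Am
  rw [Finset.sum_image (by intro x _ y _ h; exact ((Nat.pair_eq_pair).1 h).2)]
  have hq : q φ m = (φ m - 1) / m + 1 := rfl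
  rw [hq, Finset.sum_range_succ]
  have h1 : ∀ i ∈ Finset.range ((φ m - 1) / m), wgt φ (Nat.pair m i) = m := by
    intro i hi
    exact wgt_eq_of_lt φ hm (by have := Finset.mem_range.1 hi; rw [hq]; omega)
  rw [Finset.sum_congr rfl h1, Finset.sum_const, Finset.card_range, smul_eq_mul]
  have h2 : wgt φ (Nat.pair m ((φ m - 1) / m)) = s φ m := by
    unfold wgt
    simp only [Nat.unpair_pair]
    rw [if_neg (by omega), if_neg (by rw [hq]; omega), if_pos (by rw [hq])]
    exact max_eq_right (s_pos φ (by omega))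
  rw [h2]
  have h3 : ((φ m - 1) / m) * m ≤ φ m - 1 := Nat.div_mul_le_self _ _
  unfold s; omega

/-- the all-zero row. -/
def zr : ℕ → Fin 2 := fun _ => 0

/-- the unit row. -/
def unitr (a : ℕ) : ℕ → Fin 2 := fun b => if b = a then 1 else 0

theorem unitr_ne_zr (a : ℕ) : unitr a ≠ zr := by
  intro h
  have := congrFun h a
  simp [unitr, zr] at this

/-- the table `T_m`. -/
def Tm (φ : ℕ → ℕ) (m : ℕ) : Table 0 where
  attrs := Am φ m
  rows := insert zr ((Am φ m).image unitr)
  dec := fun r => if r = zr then false else true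
  supp := by
    intro r hr a ha
    rcases Finset.mem_insert.1 hr with rfl | hr
    · rfl
    · rcases Finset.mem_image.1 hr with ⟨b, hb, rfl⟩
      have : a ≠ b := fun h => ha (h ▸ hb)
      simp [unitr, this]

theorem Tm_dec_zr (φ : ℕ → ℕ) (m : ℕ) : (Tm φ m).dec zr = false := by
  simp [Tm]

theorem Tm_dec_unitr (φ : ℕ → ℕ) (m : ℕ) (a : ℕ) : (Tm φ m).dec (unitr a) = true := by
  simp [Tm, unitr_ne_zr a]

theorem restrict_eq_self {T : Table 0} {r} (hr : r ∈ T.rows) : restrict T.attrs r = r := by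
  funext a
  by_cases h : a ∈ T.attrs
  · simp [restrict, h]
  · simp [restrict, h, T.supp r hr a h]

theorem restrict_restrict {B B' : Finset ℕ} (h : B ⊆ B') (r : ℕ → Fin 2) :
    restrict (k := 0) B (restrict B' r) = restrict B r := by
  funext a
  by_cases ha : a ∈ B
  · simp [restrict, ha, h ha]
  · simp [restrict, ha]

theorem inClosure_refl (T : Table 0) : InClosure T T := by
  refine ⟨subset_rfl, ?_⟩
  ext r
  constructor
  · intro hr; exact ⟨r, hr, restrict_eq_self hr⟩
  · rintro ⟨r₀, h₀, rfl⟩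
    rw [restrict_eq_self h₀]; exact h₀

theorem inClosure_trans {T'' T' T : Table 0} (h1 : InClosure T'' T') (h2 : InClosure T' T) :
    InClosure T'' T := by
  refine ⟨h1.1.trans h2.1, ?_⟩
  rw [h1.2, h2.2, ← Set.image_comp]
  have hfe : restrict (k := 0) T''.attrs ∘ restrict T'.attrs = restrict T''.attrs :=
    funext (restrict_restrict h1.1)
  rw [hfe]

theorem restrict_zr (B : Finset ℕ) : restrict (k := 0) B zr = zr := by
  funext a; simp [restrict, zr]

theorem restrict_unitr_mem {B : Finset ℕ} {a : ℕ} (h : a ∈ B) :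
    restrict (k := 0) B (unitr a) = unitr a := by
  funext b
  by_cases hb : b ∈ B
  · simp [restrict, hb]
  · have : b ≠ a := fun hba => hb (hba ▸ h)
    simp [restrict, hb, unitr, this]

theorem restrict_unitr_not_mem {B : Finset ℕ} {a : ℕ} (h : a ∉ B) :
    restrict (k := 0) B (unitr a) = zr := by
  funext b
  by_cases hb : b ∈ B
  · have : b ≠ a := fun hba => h (hba ▸ hb)
    simp [restrict, hb, unitr, this, zr]
  · simp [restrict, hb, zr]

theorem mem_rows_iff {φ : ℕ → ℕ} {m : ℕ} {T : Table 0} (h : InClosure T (Tm φ m))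
    (r : ℕ → Fin 2) : r ∈ T.rows ↔ (r = zr ∨ ∃ a ∈ T.attrs, r = unitr a) := by
  have hmem : r ∈ (↑T.rows : Set (ℕ → Fin 2)) ↔
      r ∈ restrict T.attrs '' (↑(Tm φ m).rows : Set (ℕ → Fin 2)) := by rw [h.2]
  rw [← Finset.mem_coe, hmem]
  constructor
  · rintro ⟨r₀, h₀, rfl⟩
    have h₀' : r₀ ∈ (Tm φ m).rows := h₀
    rcases Finset.mem_insert.1 h₀' with rfl | h₀''
    · left; exact restrict_zr _
    · rcases Finset.mem_image.1 h₀'' with ⟨a, _, rfl⟩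
      by_cases hB : a ∈ T.attrs
      · right; exact ⟨a, hB, restrict_unitr_mem hB⟩
      · left; exact restrict_unitr_not_mem hB
  · rintro (rfl | ⟨a, ha, rfl⟩)
    · exact ⟨zr, Finset.mem_insert_self _ _, restrict_zr _⟩
    · refine ⟨unitr a, ?_, restrict_unitr_mem ha⟩
      exact Finset.mem_insert_of_mem (Finset.mem_image_of_mem _ (h.1 ha))

/-- the chain decision tree querying the attributes of `l` in order. -/
def chain (d : Bool) (f : ℕ → Bool) : List ℕ → DT 0
  | [] => DT.leaf d
  | a :: l => DT.node a (fun v => if v = 0 then chain d f l else DT.leaf (f a))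

theorem eval_chain_zr (d : Bool) (f : ℕ → Bool) (l : List ℕ) :
    (chain d f l).eval zr = d := by
  induction l with
  | nil => rfl
  | cons a t ih =>
    show DT.eval (if zr a = 0 then chain d f t else DT.leaf (f a)) zr = d
    simpa [zr] using ih

theorem eval_chain_not_mem (d : Bool) (f : ℕ → Bool) {l : List ℕ} {b : ℕ} (hb : b ∉ l) :
    (chain d f l).eval (unitr b) = d := by
  induction l with
  | nil => rfl
  | cons a t ih =>
    have hab : a ≠ b := fun h => hb (h ▸ List.mem_cons_self)
    show DT.eval (if unitr b a = 0 then chain d f t else DT.leaf (f a)) (unitr b) = d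
    have : unitr b a = 0 := by simp [unitr, hab]
    rw [this, if_pos rfl]
    exact ih (fun h => hb (List.mem_cons_of_mem a h))

theorem eval_chain_mem (d : Bool) (f : ℕ → Bool) {l : List ℕ} {b : ℕ} (hb : b ∈ l) :
    (chain d f l).eval (unitr b) = f b := by
  induction l with
  | nil => exact absurd hb List.not_mem_nil
  | cons a t ih =>
    show DT.eval (if unitr b a = 0 then chain d f t else DT.leaf (f a)) (unitr b) = f b
    by_cases hab : a = b
    · subst hab
      have : unitr a a = 1 := by simp [unitr]
      rw [this]
      simp [DT.eval]
    · have : unitr b a = 0 := by simp [unitr, hab]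
      rw [this, if_pos rfl]
      exact ih (by rcases List.mem_cons.1 hb with h | h; exact absurd h.symm hab; exact h)

theorem cost_chain (φ : ℕ → ℕ) (d : Bool) (f : ℕ → Bool) (l : List ℕ) (w : List ℕ) :
    DT.cost (psim φ).ψ (chain d f l) w ≤ (l.map (wgt φ)).sum + (w.map (wgt φ)).sum := by
  induction l generalizing w with
  | nil =>
    show (w.map (wgt φ)).sum ≤ (List.map (wgt φ) []).sum + (w.map (wgt φ)).sum
    simp
  | cons a t ih =>
    show (Finset.univ.sup fun v : Fin 2 =>
        DT.cost (psim φ).ψ (if v = 0 then chain d f t else DT.leaf (f a)) (a :: w)) ≤ _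
    apply Finset.sup_le
    intro v _
    by_cases hv : v = 0
    · rw [hv, if_pos rfl]
      have := ih (a :: w)
      simp only [List.map_cons, List.sum_cons] at this ⊢
      omega
    · rw [if_neg hv]
      show ((a :: w).map (wgt φ)).sum ≤ _
      simp only [List.map_cons, List.sum_cons]
      omega

theorem attrSet_chain (d : Bool) (f : ℕ → Bool) (l : List ℕ) :
    (chain d f l).attrSet ⊆ l.toFinset := by
  induction l with
  | nil => simp [chain, DT.attrSet]
  | cons a t ih =>
    intro x hx
    have hx' : x ∈ insert a (Finset.univ.biUnion fun v : Fin 2 =>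
        (if v = 0 then chain d f t else DT.leaf (f a)).attrSet) := hx
    rw [List.toFinset_cons]
    rcases Finset.mem_insert.1 hx' with rfl | hx''
    · exact Finset.mem_insert_self _ _
    · rcases Finset.mem_biUnion.1 hx'' with ⟨v, _, hv⟩
      by_cases h0 : v = 0
      · rw [h0, if_pos rfl] at hv
        exact Finset.mem_insert_of_mem (ih hv)
      · rw [if_neg h0] at hv
        exact absurd hv (by simp [DT.attrSet])

/-- existence of a chain decision tree for tables from the closure. -/
theorem exists_chain_DT (φ : ℕ → ℕ) {T : Table 0}
    (hrows : ∀ r : ℕ → Fin 2, r ∈ T.rows ↔ (r = zr ∨ ∃ a ∈ T.attrs, r = unitr a))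
    (C : Finset ℕ) (hC2 : C ⊆ T.attrs)
    (hC1 : ∀ a ∈ T.attrs, T.dec (unitr a) ≠ T.dec zr → a ∈ C) :
    ∃ Γ : DT 0, IsDT T Γ ∧ Γ.cost (psim φ).ψ [] ≤ C.sum (wgt φ) := by
  refine ⟨chain (T.dec zr) (fun a => T.dec (unitr a)) C.toList, ⟨?_, ?_⟩, ?_⟩
  · intro x hx
    have := attrSet_chain (T.dec zr) (fun a => T.dec (unitr a)) C.toList hx
    rw [Finset.toList_toFinset] at this
    exact hC2 this
  · intro r hr
    rcases (hrows r).1 hr with rfl | ⟨a, ha, rfl⟩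
    · exact eval_chain_zr _ _ _
    · by_cases hc : a ∈ C
      · exact eval_chain_mem _ _ ((Finset.mem_toList).2 hc)
      · rw [eval_chain_not_mem _ _ (fun h => hc ((Finset.mem_toList).1 h))]
        by_contra hne
        exact hc (hC1 a ha (fun h => hne h.symm))
  · have := cost_chain φ (T.dec zr) (fun a => T.dec (unitr a)) C.toList []
    simpa [sum_toList] using this

theorem psid_le_sum (φ : ℕ → ℕ) {T : Table 0}
    (hrows : ∀ r : ℕ → Fin 2, r ∈ T.rows ↔ (r = zr ∨ ∃ a ∈ T.attrs, r = unitr a))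
    (C : Finset ℕ) (hC2 : C ⊆ T.attrs)
    (hC1 : ∀ a ∈ T.attrs, T.dec (unitr a) ≠ T.dec zr → a ∈ C) :
    psid (psim φ).ψ T ≤ C.sum (wgt φ) := by
  rcases exists_chain_DT φ hrows C hC2 hC1 with ⟨Γ, hΓ, hc⟩
  exact le_trans (Nat.sInf_le ⟨Γ, hΓ, rfl⟩) hc

/-- the word of attributes along the path of row `r`. -/
def pathW : DT 0 → (ℕ → Fin 2) → List ℕ
  | DT.leaf _, _ => []
  | DT.node a ch, r => a :: pathW (ch (r a)) r

theorem path_le_cost (φ : ℕ → ℕ) (Γ : DT 0) (r : ℕ → Fin 2) (w : List ℕ) :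
    ((pathW Γ r).map (wgt φ)).sum + (w.map (wgt φ)).sum ≤ DT.cost (psim φ).ψ Γ w := by
  induction Γ generalizing w with
  | leaf b =>
    show (([] : List ℕ).map (wgt φ)).sum + (w.map (wgt φ)).sum ≤ (w.map (wgt φ)).sum
    simp
  | node a ch ih =>
    show ((a :: pathW (ch (r a)) r).map (wgt φ)).sum + (w.map (wgt φ)).sum ≤
      Finset.univ.sup fun i => DT.cost (psim φ).ψ (ch i) (a :: w)
    refine le_trans ?_ (Finset.le_sup (Finset.mem_univ (r a)))
    have := ih (r a) (a :: w)
    simp only [List.map_cons, List.sum_cons] at this ⊢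
    omega

theorem eval_agree (Γ : DT 0) (r r' : ℕ → Fin 2)
    (h : ∀ b ∈ pathW Γ r, r' b = r b) : Γ.eval r' = Γ.eval r := by
  induction Γ with
  | leaf b => rfl
  | node a ch ih =>
    have ha : r' a = r a := h a List.mem_cons_self
    show DT.eval (ch (r' a)) r' = DT.eval (ch (r a)) r
    rw [ha]
    exact ih (r a) (fun b hb => h b (List.mem_cons_of_mem _ hb))

theorem covers (φ : ℕ → ℕ) {m : ℕ} {Γ : DT 0} (hΓ : IsDT (Tm φ m) Γ) :
    ∀ a ∈ Am φ m, a ∈ pathW Γ zr := by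
  intro a ha
  by_contra hna
  have hagree : ∀ b ∈ pathW Γ zr, unitr a b = zr b := by
    intro b hb
    have : b ≠ a := fun h => hna (h ▸ hb)
    simp [unitr, zr, this]
  have heq : Γ.eval (unitr a) = Γ.eval zr := eval_agree Γ zr (unitr a) hagree
  have h1 : Γ.eval zr = false := by
    rw [hΓ.2 zr (Finset.mem_insert_self _ _), Tm_dec_zr]
  have h2 : Γ.eval (unitr a) = true := by
    rw [hΓ.2 (unitr a) (Finset.mem_insert_of_mem (Finset.mem_image_of_mem _ ha)),
      Tm_dec_unitr]
  rw [h1, h2] at heq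
  simp at heq

theorem Tm_rows_iff (φ : ℕ → ℕ) (m : ℕ) (r : ℕ → Fin 2) :
    r ∈ (Tm φ m).rows ↔ (r = zr ∨ ∃ a ∈ (Tm φ m).attrs, r = unitr a) := by
  exact mem_rows_iff (inClosure_refl _) r

theorem psid_Tm (φ : ℕ → ℕ) {m : ℕ} (hm : 1 ≤ m) (hge : m ≤ φ m) :
    psid (psim φ).ψ (Tm φ m) = φ m := by
  have hrows := Tm_rows_iff φ m
  have hle : psid (psim φ).ψ (Tm φ m) ≤ φ m := by
    have := psid_le_sum φ hrows (Am φ m) subset_rfl (fun a ha _ => ha)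
    rwa [sum_Am φ hm hge] at this
  have hne : {n | ∃ Γ : DT 0, IsDT (Tm φ m) Γ ∧ Γ.cost (psim φ).ψ [] = n}.Nonempty := by
    rcases exists_chain_DT φ hrows (Am φ m) subset_rfl (fun a ha _ => ha) with ⟨Γ, hΓ, _⟩
    exact ⟨_, Γ, hΓ, rfl⟩
  have hmem := Nat.sInf_mem hne
  rcases hmem with ⟨Γ, hΓ, hcost⟩
  have hge2 : φ m ≤ psid (psim φ).ψ (Tm φ m) := by
    show φ m ≤ sInf {n | ∃ Γ : DT 0, IsDT (Tm φ m) Γ ∧ Γ.cost (psim φ).ψ [] = n}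
    rw [← hcost]
    calc φ m = (Am φ m).sum (wgt φ) := (sum_Am φ hm hge).symm
      _ ≤ ((pathW Γ zr).map (wgt φ)).sum := sum_le_list_sum φ _ _ (covers φ hΓ)
      _ ≤ Γ.cost (psim φ).ψ [] := by
          have := path_le_cost φ Γ zr []
          simpa using this
  omega

/-- a trivially correct SNDT: one full rule per accepted row. -/
def fullRules (T : Table 0) : Finset (List (ℕ × Fin 2)) :=
  (T.rows.filter fun r => T.dec r = true).image
    fun r => (T.attrs.sort (· ≤ ·)).map fun a => (a, r a)

theorem isSNDT_fullRules (T : Table 0) : IsSNDT T (fullRules T) := by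
  refine ⟨?_, ?_, ?_⟩
  · intro rule hrule p hp
    rcases Finset.mem_image.1 hrule with ⟨r, _, rfl⟩
    rcases List.mem_map.1 hp with ⟨a, ha, rfl⟩
    exact (Finset.mem_sort _).1 ha
  · intro r hr hdec
    refine ⟨_, Finset.mem_image_of_mem _ (Finset.mem_filter.2 ⟨hr, hdec⟩), ?_⟩
    intro p hp
    rcases List.mem_map.1 hp with ⟨a, _, rfl⟩
    rfl
  · intro rule hrule r hr hsat
    rcases Finset.mem_image.1 hrule with ⟨r₀, hr₀, rfl⟩
    have hr₀r := Finset.mem_filter.1 hr₀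
    have hreq : r = r₀ := by
      funext a
      by_cases ha : a ∈ T.attrs
      · exact hsat (a, r₀ a) (List.mem_map.2 ⟨a, (Finset.mem_sort _).2 ha, rfl⟩)
      · rw [T.supp r hr a ha, T.supp r₀ hr₀r.1 a ha]
    rw [hreq]
    exact hr₀r.2

theorem exists_min_sndt (ψf : List ℕ → ℕ) (T : Table 0) :
    ∃ R, IsSNDT T R ∧ R.sup (fun rule => ψf (rule.map Prod.fst)) = psis ψf T := by
  have hne : {m | ∃ R, IsSNDT T R ∧
      R.sup (fun rule => ψf (rule.map Prod.fst)) = m}.Nonempty :=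
    ⟨_, fullRules T, isSNDT_fullRules T, rfl⟩
  exact Nat.sInf_mem hne

theorem psis_Tm_le (φ : ℕ → ℕ) {m : ℕ} (hm : 1 ≤ m) :
    psis (psim φ).ψ (Tm φ m) ≤ m := by
  set R : Finset (List (ℕ × Fin 2)) :=
    (Am φ m).image (fun a => [(a, (1 : Fin 2))]) with hRdef
  have hsndt : IsSNDT (Tm φ m) R := by
    refine ⟨?_, ?_, ?_⟩
    · intro rule hrule p hp
      rcases Finset.mem_image.1 hrule with ⟨a, ha, rfl⟩
      rcases List.mem_singleton.1 hp with rfl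
      exact ha
    · intro r hr hdec
      rcases (Tm_rows_iff φ m r).1 hr with rfl | ⟨a, ha, rfl⟩
      · rw [Tm_dec_zr] at hdec; exact absurd hdec (by simp)
      · refine ⟨[(a, (1 : Fin 2))], Finset.mem_image_of_mem _ ha, ?_⟩
        intro p hp
        rcases List.mem_singleton.1 hp with rfl
        simp [unitr]
    · intro rule hrule r hr hsat
      rcases Finset.mem_image.1 hrule with ⟨a, _, rfl⟩
      have h1 : r a = 1 := hsat (a, (1 : Fin 2)) (List.mem_singleton.2 rfl)
      have hrz : r ≠ zr := by
        intro h; rw [h] at h1; exact absurd h1 (by simp [zr])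
      show (if r = zr then false else true) = true
      rw [if_neg hrz]
  have hsup : R.sup (fun rule => (psim φ).ψ (rule.map Prod.fst)) ≤ m := by
    apply Finset.sup_le
    intro rule hrule
    rcases Finset.mem_image.1 hrule with ⟨a, ha, rfl⟩
    show ([a].map (wgt φ)).sum ≤ m
    simpa using wgt_le_of_mem φ hm ha
  exact le_trans (Nat.sInf_le ⟨R, hsndt, rfl⟩) hsup

theorem psid_le_of_psis_le (φ : ℕ → ℕ) (hmono : Monotone φ) (hge : ∀ n, n ≤ φ n)
    {m n : ℕ} (hm : 1 ≤ m) {T : Table 0} (hcl : InClosure T (Tm φ m))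
    (hpsis : psis (psim φ).ψ T ≤ n) : psid (psim φ).ψ T ≤ φ n := by
  have hrows := mem_rows_iff hcl
  have hsub : T.attrs ⊆ Am φ m := hcl.1
  set Bd : Finset ℕ := T.attrs.filter (fun a => T.dec (unitr a) ≠ T.dec zr) with hBddef
  have hBd_sub : Bd ⊆ T.attrs := Finset.filter_subset _ _
  have hpsid : psid (psim φ).ψ T ≤ Bd.sum (wgt φ) :=
    psid_le_sum φ hrows Bd hBd_sub (fun a ha hne => Finset.mem_filter.2 ⟨ha, hne⟩)
  have hzr : zr ∈ T.rows := (hrows zr).2 (Or.inl rfl)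
  by_cases hnm : m ≤ n
  · have h1 := psid_le_sum φ hrows T.attrs subset_rfl (fun a ha _ => ha)
    have h2 : T.attrs.sum (wgt φ) ≤ (Am φ m).sum (wgt φ) :=
      Finset.sum_le_sum_of_subset hsub
    rw [sum_Am φ hm (hge m)] at h2
    exact le_trans h1 (le_trans h2 (hmono hnm))
  · push_neg at hnm
    rcases exists_min_sndt (psim φ).ψ T with ⟨R, hR, hsupeq⟩
    have hsupn : R.sup (fun rule => (psim φ).ψ (rule.map Prod.fst)) ≤ n := by
      rw [hsupeq]; exact hpsis
    have hfin : Bd.sum (wgt φ) ≤ n := by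
      by_cases hd0 : T.dec zr = true
      · rcases hR.2.1 zr hzr hd0 with ⟨rule, hrule, hsat⟩
        have hcov : ∀ a ∈ Bd, a ∈ rule.map Prod.fst := by
          intro a ha
          have haa : a ∈ T.attrs := hBd_sub ha
          have hadec : T.dec (unitr a) ≠ T.dec zr := (Finset.mem_filter.1 ha).2
          have hau : unitr a ∈ T.rows := (hrows _).2 (Or.inr ⟨a, haa, rfl⟩)
          have hnot : ¬ RuleSat rule (unitr a) := fun hs =>
            hadec (by rw [hR.2.2 rule hrule _ hau hs, hd0])
          rw [RuleSat] at hnot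
          push_neg at hnot
          rcases hnot with ⟨p, hp, hpne⟩
          have hp2 : p.2 = 0 := (hsat p hp).symm
          have hp1 : p.1 = a := by
            by_contra hne2
            apply hpne
            rw [hp2]
            simp [unitr, hne2]
          exact List.mem_map.2 ⟨p, hp, hp1⟩
        have h1 : Bd.sum (wgt φ) ≤ ((rule.map Prod.fst).map (wgt φ)).sum :=
          sum_le_list_sum φ _ _ hcov
        have h2 : ((rule.map Prod.fst).map (wgt φ)).sum ≤ n :=
          le_trans (Finset.le_sup (f := fun rule => (psim φ).ψ (rule.map Prod.fst)) hrule)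
            hsupn
        omega
      · have hkey : ∀ a ∈ Bd, wgt φ a ≤ n := by
          intro a ha
          have haa : a ∈ T.attrs := hBd_sub ha
          have hadec : T.dec (unitr a) ≠ T.dec zr := (Finset.mem_filter.1 ha).2
          have hdz : T.dec zr = false := by
            cases h : T.dec zr
            · rfl
            · exact absurd h hd0
          have hdec_a : T.dec (unitr a) = true := by
            cases h : T.dec (unitr a)
            · rw [h, hdz] at hadec; exact absurd rfl hadec
            · rfl
          have hau : unitr a ∈ T.rows := (hrows _).2 (Or.inr ⟨a, haa, rfl⟩)
          rcases hR.2.1 _ hau hdec_a with ⟨rule, hrule, hsat⟩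
          by_cases hall : ∀ p ∈ rule, p.2 = 0
          · have hsz : RuleSat rule zr := fun p hp => by rw [hall p hp]; rfl
            have := hR.2.2 rule hrule zr hzr hsz
            rw [hdz] at this
            exact absurd this (by simp)
          · push_neg at hall
            rcases hall with ⟨p, hp, hp2⟩
            have hp1 : p.1 = a := by
              have hs := hsat p hp
              by_contra hne2
              rw [show unitr a p.1 = 0 by simp [unitr, hne2]] at hs
              exact hp2 hs.symm
            have hmem : a ∈ rule.map Prod.fst := List.mem_map.2 ⟨p, hp, hp1⟩
            have h1 : ({a} : Finset ℕ).sum (wgt φ) ≤ ((rule.map Prod.fst).map (wgt φ)).sum :=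
              sum_le_list_sum φ _ _ (by intro b hb; rw [Finset.mem_singleton.1 hb]; exact hmem)
            rw [Finset.sum_singleton] at h1
            have h2 : ((rule.map Prod.fst).map (wgt φ)).sum ≤ n :=
              le_trans (Finset.le_sup (f := fun rule => (psim φ).ψ (rule.map Prod.fst)) hrule)
                hsupn
            omega
        rcases Finset.eq_empty_or_nonempty Bd with he | ⟨c, hc⟩
        · rw [he]; simp
        · have huniq : ∀ a ∈ Bd, a = Nat.pair m (q φ m - 1) := fun a ha =>
            eq_heavy_of_small φ hm (hsub (hBd_sub ha))
              (lt_of_le_of_lt (hkey a ha) hnm)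
          have hBd_eq : Bd = {c} :=
            Finset.eq_singleton_iff_unique_mem.2
              ⟨hc, fun a ha => (huniq a ha).trans (huniq c hc).symm⟩
          rw [hBd_eq, Finset.sum_singleton]
          exact hkey c hc
    exact le_trans hpsid (le_trans hfin (hge n))

/-- the one-row table with no columns. -/
def T0 : Table 0 where
  attrs := ∅
  rows := {zr}
  dec := fun _ => false
  supp := by
    intro r hr a _
    rw [Finset.mem_singleton.1 hr]
    rfl

theorem T0_in (φ : ℕ → ℕ) : InClosure T0 (Tm φ 1) := by
  refine ⟨Finset.empty_subset _, ?_⟩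
  have hres : ∀ r : ℕ → Fin 2, restrict (k := 0) (∅ : Finset ℕ) r = zr := by
    intro r; funext a; simp [restrict, zr]
  show (↑({zr} : Finset (ℕ → Fin 2)) : Set (ℕ → Fin 2)) =
    restrict (∅ : Finset ℕ) '' (↑(Tm φ 1).rows : Set (ℕ → Fin 2))
  ext r
  constructor
  · intro hr
    have : r = zr := Finset.mem_singleton.1 hr
    subst this
    exact ⟨zr, Finset.mem_insert_self _ _, hres zr⟩
  · rintro ⟨r₀, _, rfl⟩
    rw [hres r₀]
    exact Finset.mem_singleton_self _

theorem psis_T0 (φ : ℕ → ℕ) : psis (psim φ).ψ T0 = 0 := by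
  apply Nat.le_zero.1
  have hsndt : IsSNDT T0 (∅ : Finset (List (ℕ × Fin 2))) := by
    refine ⟨?_, ?_, ?_⟩
    · intro rule hrule; exact absurd hrule (Finset.notMem_empty _)
    · intro r hr hdec
      exact absurd hdec (by simp [T0])
    · intro rule hrule; exact absurd hrule (Finset.notMem_empty _)
  exact le_trans (Nat.sInf_le ⟨∅, hsndt, rfl⟩) (by simp)

theorem psid_T0 (φ : ℕ → ℕ) : psid (psim φ).ψ T0 = 0 := by
  apply Nat.le_zero.1
  have hdt : IsDT T0 (DT.leaf false) := by
    refine ⟨by simp [DT.attrSet], ?_⟩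
    intro r hr
    rfl
  exact le_trans (Nat.sInf_le ⟨DT.leaf false, hdt, rfl⟩) (by simp [DT.cost, psim])

end

end PhiProof

/-- Theorem 5(b): for every nondecreasing `φ : ω → ω` with
`φ(0) = 0` and `φ(n) ≥ n`, there are a bounded complexity measure `ψ` and a
nonempty closed class `A` of decision tables over `E₂` such that
`F_{ψ,A}(n) = max{ψ^d(T) : T ∈ A, ψ^s(T) ≤ n}` is defined and equals `φ(n)`
for every `n`. -/
theorem exists_class_realizing_phi (φ : ℕ → ℕ) (hmono : Monotone φ)
    (h0 : φ 0 = 0) (hge : ∀ n : ℕ, n ≤ φ n) :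
    ∃ ψ : CMeasure, ψ.Bounded ∧ ∃ A : Set (Table 0), ClosedClass A ∧
      ∀ n : ℕ,
        (∀ T ∈ A, psis ψ.ψ T ≤ n → psid ψ.ψ T ≤ φ n) ∧
        (∃ T ∈ A, psis ψ.ψ T ≤ n ∧ psid ψ.ψ T = φ n) := by
  refine ⟨PhiProof.psim φ, PhiProof.psim_bounded φ,
    {T | ∃ m, 1 ≤ m ∧ InClosure T (PhiProof.Tm φ m)}, ⟨⟨PhiProof.Tm φ 1, 1, le_refl 1,
      PhiProof.inClosure_refl _⟩, ?_⟩, ?_⟩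
  · rintro T ⟨m, hm, hcl⟩ T' hcl'
    exact ⟨m, hm, PhiProof.inClosure_trans hcl' hcl⟩
  · intro n
    constructor
    · rintro T ⟨m, hm, hcl⟩ hpsis
      exact PhiProof.psid_le_of_psis_le φ hmono hge hm hcl hpsis
    · rcases Nat.eq_zero_or_pos n with rfl | hn
      · exact ⟨PhiProof.T0, ⟨1, le_refl 1, PhiProof.T0_in φ⟩,
          le_of_eq (PhiProof.psis_T0 φ), by rw [PhiProof.psid_T0 φ, h0]⟩
      · exact ⟨PhiProof.Tm φ n, ⟨n, hn, PhiProof.inClosure_refl _⟩,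
          PhiProof.psis_Tm_le φ hn, PhiProof.psid_Tm φ hn (hge n)⟩
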